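/- (Uniform continuity of integration on step functions) For all rational step functions f, g : S ℚ, |fold_affine f − fold_affine g| ≤ d¹ f g, where d¹ f g := ‖map2 (·−·) f g‖₁. In particular fold_affine : S ℚ → ℚ is uniformly continuous with modulus the identity for the L¹ metric. -/

import Mathlib

set_option linter.unusedVariables false

/-- Rationals strictly between 0 and 1. -/
abbrev OO : Type := {q : ℚ // 0 < q ∧ q < 1}

/-- Rational step functions on the unit interval with values in `X`. -/
inductive S (X : Type) : Type
  | const : X → S X
  | glue : OO → S X → S X → S X

namespace S

def divO (a o : OO) (h : a.1 < o.1) : OO :=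
  ⟨a.1 / o.1, div_pos a.2.1 o.2.1, (div_lt_one o.2.1).2 h⟩

def subO (a o : OO) (h : o.1 < a.1) : OO :=
  ⟨(a.1 - o.1) / (1 - o.1),
    div_pos (by linarith) (by linarith [o.2.2]),
    (div_lt_one (by linarith [o.2.2])).2 (by linarith [a.2.2])⟩

/-- Left split: the part of the step function on `[0,a]`, rescaled to `[0,1]`. -/
def splitL {X : Type} : S X → OO → S X
  | const x, _ => const x
  | glue o f g, a =>
      if h : a.1 < o.1 then splitL f (divO a o h)
      else if h' : o.1 < a.1 then glue (divO o a h') f (splitL g (subO a o h'))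
      else f

/-- Right split: the part of the step function on `[a,1]`, rescaled to `[0,1]`. -/
def splitR {X : Type} : S X → OO → S X
  | const x, _ => const x
  | glue o f g, a =>
      if h : a.1 < o.1 then glue (subO o a h) (splitR f (divO a o h)) g
      else if h' : o.1 < a.1 then splitR g (subO a o h')
      else g

/-- The catamorphism (fold) for step functions. -/
def fold {X Y : Type} (φ : X → Y) (ψ : OO → Y → Y → Y) : S X → Y
  | const x => φ x
  | glue o f g => ψ o (fold φ ψ f) (fold φ ψ g)

/-- `map` for step functions. -/
def mapS {X Y : Type} (f : X → Y) : S X → S Y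
  | const x => const (f x)
  | glue o l r => glue o (mapS f l) (mapS f r)

/-- The applicative `ap` (pointwise application) for step functions. -/
def ap {X Y : Type} : S (X → Y) → S X → S Y
  | const f, x => mapS f x
  | glue o fl fr, x => glue o (ap fl (splitL x o)) (ap fr (splitR x o))

/-- Binary map. -/
def map2 {X Y Z : Type} (f : X → Y → Z) (a : S X) (b : S Y) : S Z :=
  ap (mapS f a) b

/-- `fold⋆`: a step function of propositions holds everywhere. -/
def foldStar : S Prop → Prop := fold id (fun _ p q => p ∧ q)

/-- Lifting of a relation to step functions: it holds pointwise everywhere. -/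
def liftRel {X Y : Type} (R : X → Y → Prop) (f : S X) (g : S Y) : Prop :=
  foldStar (map2 R f g)

/-- The equivalence `≍` on step functions: the lifting of equality. -/
def equivS {X : Type} (f g : S X) : Prop := liftRel Eq f g

def foldSup : S ℚ → ℚ := fold id (fun _ x y => max x y)

def foldAffine : S ℚ → ℚ := fold id (fun o x y => o.1 * x + (1 - o.1) * y)

def normInf (f : S ℚ) : ℚ := foldSup (mapS (fun q => |q|) f)

def normOne (f : S ℚ) : ℚ := foldAffine (mapS (fun q => |q|) f)

def dInf (f g : S ℚ) : ℚ := normInf (map2 (· - ·) f g)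

def dOne (f g : S ℚ) : ℚ := normOne (map2 (· - ·) f g)

end S

open S

section Aux

lemma foldAffine_glue (o : OO) (x y : S ℚ) :
    foldAffine (S.glue o x y) = o.1 * foldAffine x + (1 - o.1) * foldAffine y := rfl

lemma split_eq (f : S ℚ) : ∀ a : OO,
    foldAffine f = a.1 * foldAffine (splitL f a) + (1 - a.1) * foldAffine (splitR f a) := by
  induction f with
  | const x => intro a; simp [splitL, splitR, foldAffine, fold]; ring
  | glue o l r ihl ihr =>
    intro a
    by_cases h : a.1 < o.1
    · simp only [splitL, splitR, dif_pos h]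
      rw [foldAffine_glue, foldAffine_glue, ihl (divO a o h)]
      simp only [divO, subO]
      have ho : (o.1:ℚ) ≠ 0 := ne_of_gt o.2.1
      have h1a : (1:ℚ) - a.1 ≠ 0 := by have := a.2.2; intro hc; linarith
      field_simp
      ring
    · by_cases h' : o.1 < a.1
      · simp only [splitL, splitR, dif_neg h, dif_pos h']
        rw [foldAffine_glue, foldAffine_glue, ihr (subO a o h')]
        simp only [divO, subO]
        have ha : (a.1:ℚ) ≠ 0 := ne_of_gt a.2.1
        have h1o : (1:ℚ) - o.1 ≠ 0 := by have := o.2.2; intro hc; linarith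
        field_simp
        ring
      · have hao : a.1 = o.1 := le_antisymm (not_lt.1 h') (not_lt.1 h)
        simp only [splitL, splitR, dif_neg h, dif_neg h', foldAffine_glue]
        rw [hao]

lemma foldAffine_mapS_sub (c : ℚ) (g : S ℚ) :
    foldAffine (mapS (c - ·) g) = c - foldAffine g := by
  induction g with
  | const x => rfl
  | glue o l r ihl ihr =>
    simp only [mapS, foldAffine_glue, ihl, ihr]
    have := o.2.1
    ring

lemma foldAffine_map2_sub (f : S ℚ) : ∀ g : S ℚ,
    foldAffine (map2 (· - ·) f g) = foldAffine f - foldAffine g := by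
  induction f with
  | const c => intro g; simpa [map2, mapS, ap, foldAffine, fold] using foldAffine_mapS_sub c g
  | glue o l r ihl ihr =>
    intro g
    simp only [map2, mapS, ap] at *
    rw [foldAffine_glue, ihl, ihr, foldAffine_glue, split_eq g o]
    ring

lemma abs_foldAffine_le (h : S ℚ) : |foldAffine h| ≤ foldAffine (mapS (fun q => |q|) h) := by
  induction h with
  | const x => simp [mapS, foldAffine, fold]
  | glue o l r ihl ihr =>
    simp only [mapS, foldAffine_glue]
    have h1 : (0:ℚ) < o.1 := o.2.1
    have h2 : o.1 < 1 := o.2.2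
    calc |o.1 * foldAffine l + (1 - o.1) * foldAffine r|
        ≤ |o.1 * foldAffine l| + |(1 - o.1) * foldAffine r| := abs_add_le _ _
      _ = o.1 * |foldAffine l| + (1 - o.1) * |foldAffine r| := by
          rw [abs_mul, abs_mul, abs_of_pos h1,
            abs_of_pos (show (0:ℚ) < 1 - o.1 by linarith)]
      _ ≤ _ := by nlinarith [abs_nonneg (foldAffine l), abs_nonneg (foldAffine r)]

end Aux

/-- Integration of step functions is uniformly continuous with modulus the
identity for the L¹ metric. -/
theorem foldAffine_uniformly_continuous (f g : S ℚ) :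
    |foldAffine f - foldAffine g| ≤ dOne f g ∧
    ∀ ε : ℚ, dOne f g ≤ ε → |foldAffine f - foldAffine g| ≤ ε := by
  constructor
  · rw [← foldAffine_map2_sub f g]
    exact abs_foldAffine_le _
  · intro ε hε
    calc |foldAffine f - foldAffine g| ≤ dOne f g := by
          rw [← foldAffine_map2_sub f g]; exact abs_foldAffine_le _
      _ ≤ ε := hε
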